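/- Let R = Q[x,y,z,w,t]/(x⁴, y⁴, w⁴, z⁴, x²y², y²w², z²w², xt, zt, wt, x²+y²+z²+w²). There is no pair of elements (k₁, l₁) with k₁ ∈ R of degree 0 (a rational scalar) and l₁ ∈ R of degree 1 satisfying k₁·y·t + y·l₁ = t² in R. -/
import Mathlib


open MvPolynomial

/-- The ideal
`(x⁴, y⁴, w⁴, z⁴, x²y², y²w², z²w², xt, zt, wt, x² + y² + z² + w²)` of `ℚ[x,y,z,w,t]`,
with variables `x=X 0, y=X 1, z=X 2, w=X 3, t=X 4`. -/
noncomputable def WindleIdealR : Ideal (MvPolynomial (Fin 5) ℚ) :=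
  Ideal.span {X 0 ^ 4, X 1 ^ 4, X 3 ^ 4, X 2 ^ 4, X 0 ^ 2 * X 1 ^ 2,
    X 1 ^ 2 * X 3 ^ 2, X 2 ^ 2 * X 3 ^ 2, X 0 * X 4, X 2 * X 4, X 3 * X 4,
    X 0 ^ 2 + X 1 ^ 2 + X 2 ^ 2 + X 3 ^ 2}

/-- `R = ℚ[x,y,z,w,t]/(x⁴, y⁴, w⁴, z⁴, x²y², y²w², z²w², xt, zt, wt, x²+y²+z²+w²)`. -/
noncomputable abbrev WindleQuotR : Type :=
  MvPolynomial (Fin 5) ℚ ⧸ WindleIdealR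

/-- Evaluation `x,z,w ↦ 0`, `y ↦ ε`, `t ↦ X` into dual numbers over `ℚ[X]`. -/
noncomputable def windlePhi : MvPolynomial (Fin 5) ℚ →ₐ[ℚ] DualNumber (Polynomial ℚ) :=
  aeval ![0, DualNumber.eps, 0, 0, TrivSqZeroExt.inl Polynomial.X]

lemma windlePhi_ideal : ∀ p ∈ WindleIdealR, windlePhi p = 0 := by
  intro p hp
  have : WindleIdealR ≤ RingHom.ker windlePhi.toRingHom := by
    rw [WindleIdealR, Ideal.span_le]
    intro q hq
    rw [SetLike.mem_coe, RingHom.mem_ker]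
    show windlePhi q = 0
    simp only [Set.mem_insert_iff, Set.mem_singleton_iff] at hq
    rcases hq with h|h|h|h|h|h|h|h|h|h|h <;> subst h <;>
      simp only [windlePhi, map_pow, map_mul, map_add, aeval_X, Matrix.cons_val_zero,
        Matrix.cons_val_one, Matrix.head_cons, Matrix.cons_val_two, Matrix.tail_cons,
        Matrix.cons_val_three, Matrix.cons_val_four, pow_succ, pow_zero, one_mul,
        DualNumber.eps_mul_eps, mul_zero, zero_mul, add_zero, zero_add]
  exact this hp

/-- In `R = ℚ[x,y,z,w,t]/(x⁴, y⁴, w⁴, z⁴, x²y², y²w², z²w², xt, zt, wt, x²+y²+z²+w²)`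
there is no scalar `k₁ ∈ ℚ` and degree-one element `l₁ = c₁x + c₂y + c₃z + c₄w + c₅t`
with `k₁·y·t + y·l₁ = t²`. -/
theorem windle_no_homotopy :
    ¬ ∃ (k : ℚ) (c : Fin 5 → ℚ),
      Ideal.Quotient.mk WindleIdealR
          (C k * (X 1 * X 4) + X 1 * (∑ i : Fin 5, C (c i) * X i)) =
        Ideal.Quotient.mk WindleIdealR (X 4 ^ 2) := by
  rintro ⟨k, c, h⟩
  rw [Ideal.Quotient.eq] at h
  have h0 := windlePhi_ideal _ h
  rw [map_sub, sub_eq_zero] at h0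
  have h1 := congrArg TrivSqZeroExt.fst h0
  simp only [windlePhi, Fin.sum_univ_five, map_add, map_mul, map_pow, aeval_X, aeval_C,
    Matrix.cons_val_zero, Matrix.cons_val_one, Matrix.head_cons, Matrix.cons_val_two,
    Matrix.tail_cons, Matrix.cons_val_three, Matrix.cons_val_four,
    TrivSqZeroExt.fst_add, TrivSqZeroExt.fst_mul, TrivSqZeroExt.fst_pow,
    TrivSqZeroExt.fst_inl, DualNumber.fst_eps, TrivSqZeroExt.fst_zero,
    mul_zero, zero_mul, add_zero, zero_add] at h1
  exact Polynomial.X_ne_zero (pow_eq_zero_iff (n := 2) (by norm_num) |>.mp h1.symm)
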